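/- Let A = [a_0, a_1, …, a_{v−1}] be a complex sequence of length v = md, where m, d > 1 are integers, and let A^{(d)} be its m-compression. Then for every s = 0, 1, …, d−1, PAF_{A^{(d)}}(s) = ∑_{l=0}^{m−1} PAF_A(s + ld), where on the left indices are taken modulo d and on the right modulo v. -/

import Mathlib

open Complex Finset

/-- Periodic autocorrelation function of a sequence of length `v`:
`PAF_A(s) = ∑_{k<v} a_{(k+s) mod v} · conj(a_k)`. -/
noncomputable def paf (v : ℕ) (a : ℕ → ℂ) (s : ℕ) : ℂ :=
  ∑ k ∈ Finset.range v, a ((k + s) % v) * (starRingEnd ℂ) (a k)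

/-- The `m`-compression of a sequence of length `v = d·m`:
`a_j^{(d)} = a_j + a_{j+d} + … + a_{j+(m−1)d}`. -/
noncomputable def compress (d m : ℕ) (a : ℕ → ℂ) (j : ℕ) : ℂ :=
  ∑ l ∈ Finset.range m, a (j + l * d)

private lemma sum_range_mul_aux {β : Type*} [AddCommMonoid β] (m d : ℕ) (f : ℕ → β) :
    ∑ t ∈ Finset.range (m * d), f t
      = ∑ j ∈ Finset.range m, ∑ k ∈ Finset.range d, f (k + j * d) := by
  induction m with
  | zero => simp
  | succ n ih =>
    rw [Nat.succ_mul, Finset.sum_range_add, ih, Finset.sum_range_succ]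
    simp [add_comm]

private lemma sum_shift_aux {β : Type*} [AddCommMonoid β] (m : ℕ) (hm : 0 < m)
    (f : ℕ → β) (c : ℕ) :
    ∑ l ∈ Finset.range m, f ((c + l) % m) = ∑ l ∈ Finset.range m, f l := by
  haveI : NeZero m := ⟨hm.ne'⟩
  rw [← Fin.sum_univ_eq_sum_range (fun l => f ((c + l) % m)),
    ← Fin.sum_univ_eq_sum_range (fun l => f l)]
  open Fin.NatCast in refine Fintype.sum_equiv (Equiv.addLeft (c : Fin m)) _ _ fun x => ?_
  congr 1
  open Fin.NatCast in show (c + (x : ℕ)) % m = ((c : Fin m) + x : Fin m).val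
  rw [Fin.val_add, Fin.val_natCast, Nat.mod_add_mod]

private lemma mod_lemma_aux (m d : ℕ) (hm : 0 < m) (r q : ℕ) (hr : r < d) :
    (r + q * d) % (m * d) = r + (q % m) * d := by
  conv_lhs => rw [show q = q % m + m * (q / m) from (Nat.mod_add_div q m).symm]
  rw [show r + (q % m + m * (q / m)) * d = (r + (q % m) * d) + (q / m) * (m * d) by ring,
    Nat.add_mul_mod_self_right]
  apply Nat.mod_eq_of_lt
  have h1 : q % m + 1 ≤ m := Nat.mod_lt q hm
  calc r + (q % m) * d < d + (q % m) * d := by omega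
    _ = (q % m + 1) * d := by ring
    _ ≤ m * d := Nat.mul_le_mul_right d h1

theorem paf_compress (v m d : ℕ) (hm : 1 < m) (hd : 1 < d) (hv : v = m * d)
    (a : ℕ → ℂ) (s : ℕ) (hs : s < d) :
    paf d (compress d m a) s = ∑ l ∈ Finset.range m, paf v a (s + l * d) := by
  have hm0 : 0 < m := by omega
  have hd0 : 0 < d := by omega
  unfold paf compress
  have hRHS : ∀ l, ∑ t ∈ Finset.range v, a ((t + (s + l * d)) % v) * (starRingEnd ℂ) (a t)
      = ∑ j ∈ Finset.range m, ∑ k ∈ Finset.range d,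
          a ((k + j * d + (s + l * d)) % v) * (starRingEnd ℂ) (a (k + j * d)) := by
    intro l
    rw [hv]
    exact sum_range_mul_aux m d _
  simp only [hRHS]
  conv_rhs => rw [Finset.sum_comm]
  have hLHS : ∀ k ∈ Finset.range d,
      (∑ i ∈ Finset.range m, a ((k + s) % d + i * d)) *
          (starRingEnd ℂ) (∑ j ∈ Finset.range m, a (k + j * d))
        = ∑ j ∈ Finset.range m,
            (∑ i ∈ Finset.range m, a ((k + s) % d + i * d)) *
              (starRingEnd ℂ) (a (k + j * d)) := by
    intro k _
    rw [map_sum, Finset.mul_sum]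
  rw [Finset.sum_congr rfl hLHS, Finset.sum_comm]
  refine Finset.sum_congr rfl fun j hj => ?_
  rw [Finset.sum_comm]
  refine Finset.sum_congr rfl fun k hk => ?_
  rw [Finset.mem_range] at hj hk
  rw [← Finset.sum_mul]
  congr 1
  -- key pointwise identity
  have e1 : ∀ l, k + j * d + (s + l * d)
      = (k + s) % d + ((k + s) / d + j + l) * d := fun l => by
    calc k + j * d + (s + l * d) = (k + s) + (j + l) * d := by ring
      _ = ((k + s) % d + d * ((k + s) / d)) + (j + l) * d := by rw [Nat.mod_add_div]
      _ = (k + s) % d + ((k + s) / d + j + l) * d := by ring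
  have e2 : ∀ l, ((k + s) % d + ((k + s) / d + j + l) * d) % v
      = (k + s) % d + (((k + s) / d + j + l) % m) * d := fun l => by
    rw [hv]
    exact mod_lemma_aux m d hm0 _ _ (Nat.mod_lt _ hd0)
  calc ∑ i ∈ Finset.range m, a ((k + s) % d + i * d)
      = ∑ l ∈ Finset.range m,
          a ((k + s) % d + ((((k + s) / d + j) + l) % m) * d) :=
        (sum_shift_aux m hm0 (fun i => a ((k + s) % d + i * d)) ((k + s) / d + j)).symm
    _ = ∑ l ∈ Finset.range m, a ((k + j * d + (s + l * d)) % v) := by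
        refine Finset.sum_congr rfl fun l _ => ?_
        rw [e1 l, e2 l]
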